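/- arXiv:2311.02524 — 2 statements merged into one kernel-verified Lean document; each statement's English description precedes it below -/
import Mathlib

section
/- Let 0 < ρ < 1, M > 1, p > 0 with ρM^p ≤ 1/2, and let (α_k), (β_k) be nonnegative sequences with α_k ≤ ρ^k + Σ_{i=0}^{k−1} ρ^{k−i} β_i for k ≥ 1 and Σ_{k=0}^∞ M^{pk} β_k ≤ C for some C ≥ 0. Then Σ_{k=1}^∞ M^{pk} α_k ≤ 1 + C, i.e. the series Σ M^{pk} α_k converges with an explicit bound. -/
open Finset Real

theorem summation_of_decay (ρ M p C : ℝ)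
    (hρ0 : 0 < ρ) (hρ1 : ρ < 1) (hM : 1 < M) (hp : 0 < p)
    (hsmall : ρ * M ^ p ≤ 1 / 2) (hC : 0 ≤ C)
    (α β : ℕ → ℝ) (hα : ∀ k, 0 ≤ α k) (hβ : ∀ k, 0 ≤ β k)
    (hdecay : ∀ k : ℕ, 1 ≤ k →
      α k ≤ ρ ^ k + ∑ i ∈ Finset.range k, ρ ^ (k - i) * β i)
    (hsum : ∀ n : ℕ, ∑ k ∈ Finset.range n, M ^ (p * k) * β k ≤ C) :
    Summable (fun k : ℕ => M ^ (p * (k + 1 : ℕ)) * α (k + 1)) ∧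
      ∑' k : ℕ, M ^ (p * (k + 1 : ℕ)) * α (k + 1) ≤ 1 + C := by
  have hM0 : (0:ℝ) < M := lt_trans one_pos hM
  have hMp : (0:ℝ) < M ^ p := Real.rpow_pos_of_pos hM0 p
  set q : ℝ := ρ * M ^ p with hqdef
  have hq0 : 0 ≤ q := le_of_lt (mul_pos hρ0 hMp)
  -- rewrite rpow as pow
  have hrw : ∀ k : ℕ, M ^ (p * (k:ℝ)) = (M ^ p) ^ k := by
    intro k
    rw [Real.rpow_mul hM0.le, Real.rpow_natCast]
  set g : ℕ → ℝ := fun i => (M ^ p) ^ i * β i with hgdef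
  have hg0 : ∀ i, 0 ≤ g i := fun i => mul_nonneg (pow_nonneg hMp.le i) (hβ i)
  have hgsum : ∀ n : ℕ, ∑ i ∈ Finset.range n, g i ≤ C := by
    intro n
    calc ∑ i ∈ Finset.range n, g i = ∑ i ∈ Finset.range n, M ^ (p * (i:ℝ)) * β i := by
          refine Finset.sum_congr rfl fun i _ => ?_
          rw [hrw]
        _ ≤ C := hsum n
  -- main partial sum bound
  have key : ∀ n : ℕ, ∑ k ∈ Finset.range n, M ^ (p * ((k:ℕ) + 1 : ℕ)) * α (k + 1) ≤ 1 + C := by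
    intro n
    have step : ∀ k : ℕ, M ^ (p * ((k:ℕ) + 1 : ℕ)) * α (k + 1) ≤
        (1/2:ℝ) ^ (k+1) + ∑ i ∈ Finset.range (k+1), (1/2:ℝ) ^ (k+1-i) * g i := by
      intro k
      have h1 : M ^ (p * ((k:ℕ) + 1 : ℕ)) * α (k + 1) ≤
          (M ^ p) ^ (k+1) * (ρ ^ (k+1) + ∑ i ∈ Finset.range (k+1), ρ ^ (k+1-i) * β i) := by
        rw [show ((k+1:ℕ):ℝ) = ((k:ℕ)+1:ℕ) from rfl, hrw (k+1)]
        exact mul_le_mul_of_nonneg_left (hdecay (k+1) (Nat.le_add_left 1 k))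
          (pow_nonneg hMp.le _)
      refine h1.trans ?_
      rw [mul_add, Finset.mul_sum]
      refine add_le_add ?_ (Finset.sum_le_sum ?_)
      · calc (M ^ p) ^ (k+1) * ρ ^ (k+1) = q ^ (k+1) := by rw [hqdef, mul_pow, mul_comm]
          _ ≤ (1/2:ℝ) ^ (k+1) := pow_le_pow_left₀ hq0 hsmall _
      · intro i hi
        have hik : i ≤ k := Nat.lt_succ_iff.mp (Finset.mem_range.mp hi)
        have hsplit : (M ^ p) ^ (k+1) = (M ^ p) ^ (k+1-i) * (M ^ p) ^ i := by
          rw [← pow_add]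
          congr 1
          omega
        calc (M ^ p) ^ (k+1) * (ρ ^ (k+1-i) * β i)
            = q ^ (k+1-i) * g i := by
              rw [hsplit, hqdef, mul_pow, hgdef]; ring
          _ ≤ (1/2:ℝ) ^ (k+1-i) * g i := by
              exact mul_le_mul_of_nonneg_right (pow_le_pow_left₀ hq0 hsmall _) (hg0 i)
    calc ∑ k ∈ Finset.range n, M ^ (p * ((k:ℕ) + 1 : ℕ)) * α (k + 1)
        ≤ ∑ k ∈ Finset.range n, ((1/2:ℝ) ^ (k+1) +
            ∑ i ∈ Finset.range (k+1), (1/2:ℝ) ^ (k+1-i) * g i) :=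
          Finset.sum_le_sum fun k _ => step k
      _ = (∑ k ∈ Finset.range n, (1/2:ℝ) ^ (k+1)) +
            ∑ k ∈ Finset.range n, ∑ i ∈ Finset.range (k+1), (1/2:ℝ) ^ (k+1-i) * g i := by
          rw [Finset.sum_add_distrib]
      _ ≤ 1 + C := by
          gcongr
          · -- geometric sum
            have : ∑ k ∈ Finset.range n, (1/2:ℝ) ^ (k+1)
                = (1/2) * ∑ k ∈ Finset.range n, (1/2:ℝ) ^ k := by
              rw [Finset.mul_sum]
              refine Finset.sum_congr rfl fun k _ => ?_
              rw [pow_succ]; ring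
            rw [this]
            have h2 := sum_geometric_two_le n
            linarith
          · -- double sum
            have hswap : ∑ k ∈ Finset.range n, ∑ i ∈ Finset.range (k+1), (1/2:ℝ) ^ (k+1-i) * g i
                = ∑ i ∈ Finset.range n, ∑ k ∈ Finset.Ico i n, (1/2:ℝ) ^ (k+1-i) * g i := by
              have := Finset.sum_Ico_Ico_comm 0 n (fun i k => (1/2:ℝ) ^ (k+1-i) * g i)
              simp only [Finset.range_eq_Ico] at *
              rw [← this]
            rw [hswap]
            calc ∑ i ∈ Finset.range n, ∑ k ∈ Finset.Ico i n, (1/2:ℝ) ^ (k+1-i) * g i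
                ≤ ∑ i ∈ Finset.range n, g i := by
                  refine Finset.sum_le_sum fun i hi => ?_
                  have hin : i ≤ n := le_of_lt (Finset.mem_range.mp hi)
                  have : ∑ k ∈ Finset.Ico i n, (1/2:ℝ) ^ (k+1-i) * g i
                      = (∑ j ∈ Finset.range (n-i), (1/2:ℝ) ^ (j+1)) * g i := by
                    rw [Finset.sum_Ico_eq_sum_range, Finset.sum_mul]
                    refine Finset.sum_congr rfl fun j _ => ?_
                    congr 2
                    omega
                  rw [this]
                  have hle : (∑ j ∈ Finset.range (n-i), (1/2:ℝ) ^ (j+1)) ≤ 1 := by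
                    have heq : ∑ j ∈ Finset.range (n-i), (1/2:ℝ) ^ (j+1)
                        = (1/2) * ∑ j ∈ Finset.range (n-i), (1/2:ℝ) ^ j := by
                      rw [Finset.mul_sum]
                      refine Finset.sum_congr rfl fun j _ => ?_
                      rw [pow_succ]; ring
                    rw [heq]
                    have h2 := sum_geometric_two_le (n-i)
                    linarith
                  calc (∑ j ∈ Finset.range (n-i), (1/2:ℝ) ^ (j+1)) * g i ≤ 1 * g i :=
                        mul_le_mul_of_nonneg_right hle (hg0 i)
                    _ = g i := one_mul _
              _ ≤ C := hgsum n
  have hnonneg : ∀ k : ℕ, 0 ≤ M ^ (p * ((k:ℕ) + 1 : ℕ)) * α (k + 1) :=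
    fun k => mul_nonneg (Real.rpow_nonneg hM0.le _) (hα _)
  have hsummable : Summable (fun k : ℕ => M ^ (p * ((k:ℕ) + 1 : ℕ)) * α (k + 1)) :=
    summable_of_sum_range_le hnonneg key
  exact ⟨hsummable, tsum_le_of_sum_range_le hnonneg key⟩
end

section
/- Let 0 < ρ < 1/2 and C > 0. Suppose u : Q → ℝ and for every k ≥ 1 there is a second-order parabolic polynomial P_k with sup_{Q_{ρ^k}} |u − P_k| ≤ ρ^{2k}, where the coefficients of P_k satisfy |A_k − u(0,0)| ≤ Cρ^{2k}, |B_k − b| ≤ Cρ^k (for a fixed vector b), |C_k| ≤ Ck and |D_k| ≤ Ck. Then there exists C' = C'(ρ, C) > 0 such that for all sufficiently small r > 0, sup_{Q_r} |u(x,t) − u(0,0) − b·x| ≤ C' r² log(1/r). -/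
open Matrix

noncomputable section

def parCyl (d : ℕ) (r : ℝ) : Set (EuclideanSpace ℝ (Fin d) × ℝ) :=
  {z | ‖z.1‖ < r ∧ -r ^ 2 < z.2 ∧ z.2 ≤ 0}

def parPoly {d : ℕ} (D : Matrix (Fin d) (Fin d) ℝ) (C : ℝ)
    (B : EuclideanSpace ℝ (Fin d)) (A : ℝ)
    (z : EuclideanSpace ℝ (Fin d) × ℝ) : ℝ :=
  (1 / 2) * ((z.1 : Fin d → ℝ) ⬝ᵥ D.mulVec (z.1 : Fin d → ℝ)) + C * z.2 +
    inner ℝ B z.1 + A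

lemma euclid_abs_apply_le_norm {d : ℕ} (x : EuclideanSpace ℝ (Fin d)) (i : Fin d) :
    |x i| ≤ ‖x‖ := by
  rw [EuclideanSpace.norm_eq]
  calc |x i| = Real.sqrt (‖x i‖ ^ 2) := by
        rw [Real.sqrt_sq (norm_nonneg _), Real.norm_eq_abs]
    _ ≤ Real.sqrt (∑ j, ‖x j‖ ^ 2) :=
        Real.sqrt_le_sqrt (Finset.single_le_sum (f := fun j => ‖x j‖ ^ 2)
          (fun j _ => by positivity) (Finset.mem_univ i))

theorem parabolic_C1_LogLip (d : ℕ) (ρ C : ℝ)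
    (hρ0 : 0 < ρ) (hρ1 : ρ < 1 / 2) (hC : 0 < C)
    (u : EuclideanSpace ℝ (Fin d) × ℝ → ℝ)
    (b : EuclideanSpace ℝ (Fin d))
    (D : ℕ → Matrix (Fin d) (Fin d) ℝ) (Ck : ℕ → ℝ)
    (B : ℕ → EuclideanSpace ℝ (Fin d)) (A : ℕ → ℝ)
    (happ : ∀ k : ℕ, 1 ≤ k → ∀ z ∈ parCyl d (ρ ^ k),
      |u z - parPoly (D k) (Ck k) (B k) (A k) z| ≤ ρ ^ (2 * k))
    (hA : ∀ k : ℕ, 1 ≤ k → |A k - u (0, 0)| ≤ C * ρ ^ (2 * k))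
    (hB : ∀ k : ℕ, 1 ≤ k → ‖B k - b‖ ≤ C * ρ ^ k)
    (hCk : ∀ k : ℕ, 1 ≤ k → |Ck k| ≤ C * k)
    (hD : ∀ k : ℕ, 1 ≤ k → ∀ i j, |D k i j| ≤ C * k) :
    ∃ C' : ℝ, 0 < C' ∧ ∃ r₀ : ℝ, 0 < r₀ ∧ ∀ r : ℝ, 0 < r → r ≤ r₀ →
      ∀ z ∈ parCyl d r,
        |u z - u (0, 0) - inner ℝ b z.1| ≤ C' * r ^ 2 * Real.log (1 / r) := by
  have hρ1' : ρ < 1 := hρ1.trans (by norm_num)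
  set L : ℝ := Real.log (1 / ρ) with hLdef
  have hL : 0 < L := Real.log_pos (one_lt_one_div hρ0 hρ1')
  set a : ℝ := (1 + C) / ρ ^ 2 + C / ρ with hadef
  set e : ℝ := C * ((d : ℝ) ^ 2 / 2 + 1) with hedef
  have ha : 0 < a := by
    rw [hadef]
    have h1 : 0 < (1 + C) / ρ ^ 2 := div_pos (by linarith) (by positivity)
    have h2 : 0 < C / ρ := div_pos hC hρ0
    linarith
  have he : 0 < e := by
    rw [hedef]
    have : (0:ℝ) < (d : ℝ) ^ 2 / 2 + 1 := by positivity
    exact mul_pos hC this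
  refine ⟨(a + e) / L, div_pos (by linarith) hL, ρ, hρ0, ?_⟩
  intro r hr hrρ z hz
  obtain ⟨hx, ht1, ht2⟩ := hz
  have hr1 : r < 1 := lt_of_le_of_lt hrρ hρ1'
  have hlogρ : Real.log ρ < 0 := Real.log_neg hρ0 hρ1'
  have hlogr : Real.log r < 0 := Real.log_neg hr hr1
  have hlogle : Real.log r ≤ Real.log ρ := Real.log_le_log hr hrρ
  set k : ℕ := ⌊Real.log r / Real.log ρ⌋₊ with hkdef
  have hq1 : (1:ℝ) ≤ Real.log r / Real.log ρ := by
    rw [le_div_iff_of_neg hlogρ]; linarith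
  have hk1 : 1 ≤ k := Nat.le_floor (by exact_mod_cast hq1)
  have hkq : (k : ℝ) ≤ Real.log r / Real.log ρ := Nat.floor_le (by linarith)
  have hq2 : Real.log r / Real.log ρ < k + 1 := Nat.lt_floor_add_one _
  have hlogk : Real.log r ≤ (k : ℝ) * Real.log ρ := by
    have := (le_div_iff_of_neg hlogρ).mp hkq
    linarith
  have hρk : r ≤ ρ ^ k := by
    rw [← Real.log_le_log_iff hr (pow_pos hρ0 k), Real.log_pow]
    exact hlogk
  have hρk1 : ρ ^ (k + 1) < r := by
    rw [← Real.log_lt_log_iff (pow_pos hρ0 _) hr, Real.log_pow]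
    have := (div_lt_iff_of_neg hlogρ).mp hq2
    push_cast
    linarith
  have hlog1r : Real.log (1 / r) = -Real.log r := by
    rw [one_div, Real.log_inv]
  have hlog1ρ : L = -Real.log ρ := by rw [hLdef, one_div, Real.log_inv]
  have hklog : (k : ℝ) * L ≤ Real.log (1 / r) := by
    rw [hlog1r, hlog1ρ]; linarith
  have hLlog : L ≤ Real.log (1 / r) := by
    rw [hlog1r, hlog1ρ]; linarith
  have hM : 0 < Real.log (1 / r) := lt_of_lt_of_le hL hLlog
  -- z is in the smaller cylinder
  have hzk : z ∈ parCyl d (ρ ^ k) := by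
    refine ⟨lt_of_lt_of_le hx hρk, ?_, ht2⟩
    have : r ^ 2 ≤ (ρ ^ k) ^ 2 := pow_le_pow_left₀ hr.le hρk 2
    linarith
  have h1 := happ k hk1 z hzk
  have hkR : (1:ℝ) ≤ (k:ℝ) := by exact_mod_cast hk1
  have hCkpos : 0 ≤ C * k := by positivity
  -- bounds on the pieces
  have hs0 : 0 ≤ ‖z.1‖ := norm_nonneg _
  have hquad : |(z.1 : Fin d → ℝ) ⬝ᵥ (D k).mulVec (z.1 : Fin d → ℝ)| ≤
      (d : ℝ) ^ 2 * (C * k) * ‖z.1‖ ^ 2 := by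
    have hmv : ∀ i, |(D k).mulVec (z.1 : Fin d → ℝ) i| ≤ (d : ℝ) * ((C * k) * ‖z.1‖) := by
      intro i
      calc |∑ j, D k i j * z.1 j| ≤ ∑ j, |D k i j * z.1 j| :=
            Finset.abs_sum_le_sum_abs _ _
        _ ≤ ∑ _j : Fin d, (C * k) * ‖z.1‖ := by
            refine Finset.sum_le_sum fun j _ => ?_
            rw [abs_mul]
            exact mul_le_mul (hD k hk1 i j) (euclid_abs_apply_le_norm z.1 j)
              (abs_nonneg _) hCkpos
        _ = (d : ℝ) * ((C * k) * ‖z.1‖) := by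
            rw [Finset.sum_const, Finset.card_univ, Fintype.card_fin, nsmul_eq_mul]
    calc |∑ i, z.1 i * (D k).mulVec (z.1 : Fin d → ℝ) i|
        ≤ ∑ i, |z.1 i * (D k).mulVec (z.1 : Fin d → ℝ) i| :=
          Finset.abs_sum_le_sum_abs _ _
      _ ≤ ∑ _i : Fin d, ‖z.1‖ * ((d : ℝ) * ((C * k) * ‖z.1‖)) := by
          refine Finset.sum_le_sum fun i _ => ?_
          rw [abs_mul]
          exact mul_le_mul (euclid_abs_apply_le_norm z.1 i) (hmv i) (abs_nonneg _) hs0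
      _ = (d : ℝ) * (‖z.1‖ * ((d : ℝ) * ((C * k) * ‖z.1‖))) := by
          rw [Finset.sum_const, Finset.card_univ, Fintype.card_fin, nsmul_eq_mul]
      _ = (d : ℝ) ^ 2 * (C * k) * ‖z.1‖ ^ 2 := by ring
  have habs_t : |z.2| ≤ r ^ 2 := abs_le.mpr ⟨by linarith, by nlinarith⟩
  have hCt : |Ck k * z.2| ≤ C * k * r ^ 2 := by
    rw [abs_mul]
    exact mul_le_mul (hCk k hk1) habs_t (abs_nonneg _) hCkpos
  have hBin : |(inner ℝ (B k - b) z.1 : ℝ)| ≤ C * ρ ^ k * ‖z.1‖ := by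
    calc |(inner ℝ (B k - b) z.1 : ℝ)| ≤ ‖B k - b‖ * ‖z.1‖ := abs_real_inner_le_norm _ _
      _ ≤ C * ρ ^ k * ‖z.1‖ := by
          exact mul_le_mul_of_nonneg_right (hB k hk1) hs0
  have hAb := hA k hk1
  have hdecomp : u z - u (0, 0) - inner ℝ b z.1
      = (u z - parPoly (D k) (Ck k) (B k) (A k) z)
        + (1 / 2) * ((z.1 : Fin d → ℝ) ⬝ᵥ (D k).mulVec (z.1 : Fin d → ℝ))
        + Ck k * z.2 + (inner ℝ (B k - b) z.1 : ℝ) + (A k - u (0, 0)) := by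
    simp only [parPoly, inner_sub_left]
    ring
  have hbound : |u z - u (0, 0) - inner ℝ b z.1| ≤
      ρ ^ (2 * k) + (1 / 2) * ((d : ℝ) ^ 2 * (C * k) * ‖z.1‖ ^ 2)
        + C * k * r ^ 2 + C * ρ ^ k * ‖z.1‖ + C * ρ ^ (2 * k) := by
    rw [hdecomp]
    refine le_trans (abs_add_le _ _) ?_
    refine add_le_add (le_trans (abs_add_le _ _) ?_) hAb
    refine add_le_add (le_trans (abs_add_le _ _) ?_) hBin
    refine add_le_add (le_trans (abs_add_le _ _) ?_) hCt
    refine add_le_add h1 ?_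
    rw [abs_mul]
    calc |(1:ℝ)/2| * |(z.1 : Fin d → ℝ) ⬝ᵥ (D k).mulVec (z.1 : Fin d → ℝ)|
        = (1/2) * |(z.1 : Fin d → ℝ) ⬝ᵥ (D k).mulVec (z.1 : Fin d → ℝ)| := by norm_num
      _ ≤ (1/2) * ((d : ℝ) ^ 2 * (C * k) * ‖z.1‖ ^ 2) := by linarith [hquad]
  -- bounds in terms of r
  have hρkr : ρ ^ k ≤ r / ρ := by
    rw [le_div_iff₀ hρ0]
    calc ρ ^ k * ρ = ρ ^ (k + 1) := by ring
      _ ≤ r := hρk1.le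
  have hρ2k : ρ ^ (2 * k) ≤ r ^ 2 / ρ ^ 2 := by
    have h2 : ρ ^ (2 * k) = (ρ ^ k) ^ 2 := by rw [← pow_mul, mul_comm]
    rw [h2]
    calc (ρ ^ k) ^ 2 ≤ (r / ρ) ^ 2 := pow_le_pow_left₀ (by positivity) hρkr 2
      _ = r ^ 2 / ρ ^ 2 := div_pow r ρ 2
  have hsr : ‖z.1‖ ≤ r := hx.le
  have hs2 : ‖z.1‖ ^ 2 ≤ r ^ 2 := pow_le_pow_left₀ hs0 hsr 2
  have hmid : ρ ^ (2 * k) + (1 / 2) * ((d : ℝ) ^ 2 * (C * k) * ‖z.1‖ ^ 2)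
      + C * k * r ^ 2 + C * ρ ^ k * ‖z.1‖ + C * ρ ^ (2 * k)
      ≤ a * r ^ 2 + e * ((k : ℝ) * r ^ 2) := by
    have t1 : (1 / 2) * ((d : ℝ) ^ 2 * (C * k) * ‖z.1‖ ^ 2)
        ≤ (1 / 2) * ((d : ℝ) ^ 2 * (C * k) * r ^ 2) := by
      have h0 : (0:ℝ) ≤ (d : ℝ) ^ 2 * (C * k) := by positivity
      exact mul_le_mul_of_nonneg_left (mul_le_mul_of_nonneg_left hs2 h0)
        (by norm_num)
    have t2 : C * ρ ^ k * ‖z.1‖ ≤ C * (r / ρ) * r := by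
      have h : ρ ^ k * ‖z.1‖ ≤ r / ρ * r :=
        mul_le_mul hρkr hsr hs0 (by positivity)
      rw [mul_assoc, mul_assoc]
      exact mul_le_mul_of_nonneg_left h hC.le
    have t3 : C * ρ ^ (2 * k) ≤ C * (r ^ 2 / ρ ^ 2) := by
      exact mul_le_mul_of_nonneg_left hρ2k hC.le
    have t4 : ρ ^ (2 * k) ≤ r ^ 2 / ρ ^ 2 := hρ2k
    have heq : a * r ^ 2 + e * ((k : ℝ) * r ^ 2) =
        r ^ 2 / ρ ^ 2 + (1 / 2) * ((d : ℝ) ^ 2 * (C * k) * r ^ 2)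
        + C * k * r ^ 2 + C * (r / ρ) * r + C * (r ^ 2 / ρ ^ 2) := by
      rw [hadef, hedef]; ring
    linarith
  have hfinal : a * r ^ 2 + e * ((k : ℝ) * r ^ 2)
      ≤ (a + e) / L * r ^ 2 * Real.log (1 / r) := by
    rw [div_mul_eq_mul_div, div_mul_eq_mul_div, le_div_iff₀ hL]
    have h1 : a * L ≤ a * Real.log (1 / r) := mul_le_mul_of_nonneg_left hLlog ha.le
    have h2 : e * ((k : ℝ) * L) ≤ e * Real.log (1 / r) :=
      mul_le_mul_of_nonneg_left hklog he.le
    have h1r := mul_le_mul_of_nonneg_right h1 (sq_nonneg r)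
    have h2r := mul_le_mul_of_nonneg_right h2 (sq_nonneg r)
    calc (a * r ^ 2 + e * ((k : ℝ) * r ^ 2)) * L
        = a * L * r ^ 2 + e * ((k : ℝ) * L) * r ^ 2 := by ring
      _ ≤ a * Real.log (1 / r) * r ^ 2 + e * Real.log (1 / r) * r ^ 2 := by
          linarith
      _ = (a + e) * r ^ 2 * Real.log (1 / r) := by ring
  calc |u z - u (0, 0) - inner ℝ b z.1| ≤ _ := hbound
    _ ≤ a * r ^ 2 + e * ((k : ℝ) * r ^ 2) := hmid
    _ ≤ (a + e) / L * r ^ 2 * Real.log (1 / r) := hfinal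

end
end
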